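/- arXiv:1211.0746 — 3 statements merged into one kernel-verified Lean document; each statement's English description precedes it below -/
import Mathlib

section
/- Let φ : Γ̃ → G have conjugation-stabilizer exactly Z(G). Suppose c, c' ∈ Γ \ Γ̃ and g, g' ∈ G satisfy φ ∘ Ad_c = Ad_g ∘ φ and φ ∘ Ad_{c'} = Ad_{g'} ∘ φ, and set z = g² φ(c²)⁻¹, z' = (g')² φ((c')²)⁻¹ (both in Z(G)). Then z' z⁻¹ ∈ 2Z(G), i.e. z' z⁻¹ is the square of a central element. Consequently the class [z] ∈ Z(G)/2Z(G) is independent of the choice of c and g. -/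
theorem indexTwoNormal {Γ : Type*} [Group Γ] (H : Subgroup Γ) (h : H.index = 2) :
    H.Normal := by
  constructor
  intro n hn g
  rw [Subgroup.mul_mem_iff_of_index_two h, Subgroup.mul_mem_iff_of_index_two h, inv_mem_iff]
  simp [hn]

/-- The automorphism `Ad_c : x ↦ c x c⁻¹` of an index-two (hence normal) subgroup. -/
def adSub {Γ : Type*} [Group Γ] (H : Subgroup Γ) (h : H.index = 2) (c : Γ) : H →* H where
  toFun x := ⟨c * x * c⁻¹, (indexTwoNormal H h).conj_mem x x.2 c⟩
  map_one' := by ext; simp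
  map_mul' x y := by ext; simp [mul_assoc]

/-- The class of `z = g² φ(c²)⁻¹` in `Z(G)/2Z(G)` is independent of the
choices of `c ∈ Γ \ Γ̃` and of `g`: for two choices, `z' z⁻¹` is the square of a central
element. -/
theorem obstruction_class_independent {Γ G : Type*} [Group Γ] [Group G] (H : Subgroup Γ)
    (h2 : H.index = 2) (c c' : Γ) (hc : c ∉ H) (hc' : c' ∉ H) (φ : H →* G) (g g' z z' : G)
    (hZ : ∀ h : G, (∀ x : H, h * φ x * h⁻¹ = φ x) ↔ h ∈ Subgroup.center G)
    (hg : ∀ x : H, φ (adSub H h2 c x) = g * φ x * g⁻¹)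
    (hg' : ∀ x : H, φ (adSub H h2 c' x) = g' * φ x * g'⁻¹)
    (hz : g ^ 2 * (φ ⟨c ^ 2, Subgroup.sq_mem_of_index_two h2 c⟩)⁻¹ = z)
    (hz' : g' ^ 2 * (φ ⟨c' ^ 2, Subgroup.sq_mem_of_index_two h2 c'⟩)⁻¹ = z') :
    ∃ t ∈ Subgroup.center G, z' * z⁻¹ = t ^ 2 := by
  have ha : c⁻¹ * c' ∈ H := by
    rw [Subgroup.mul_mem_iff_of_index_two h2, inv_mem_iff]
    simp [hc, hc']
  set a : H := ⟨c⁻¹ * c', ha⟩ with ha_def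
  have hbmem : c⁻¹ * (c⁻¹ * c') * c ∈ H := by
    have := (indexTwoNormal H h2).conj_mem _ ha c⁻¹
    simpa using this
  set b : H := ⟨c⁻¹ * (c⁻¹ * c') * c, hbmem⟩ with hb_def
  -- Ad_{c'} x = Ad_c (a x a⁻¹)
  have hadj : ∀ x : H, adSub H h2 c' x = adSub H h2 c (a * x * a⁻¹) := by
    intro x
    ext
    simp only [adSub, MonoidHom.coe_mk, OneHom.coe_mk, Subgroup.coe_mul, ha_def,
      InvMemClass.coe_inv]
    group
  have hab : adSub H h2 c b = a := by
    ext
    simp only [adSub, MonoidHom.coe_mk, OneHom.coe_mk, hb_def, ha_def]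
    group
  have hq : φ b = g⁻¹ * φ a * g := by
    have h1 := hg b
    rw [hab] at h1
    rw [h1]; group
  -- the central element
  set u : G := g'⁻¹ * (g * φ a) with hu
  have hcent : u ∈ Subgroup.center G := by
    rw [← hZ]
    intro x
    have key : g' * φ x * g'⁻¹ = g * (φ a * φ x * (φ a)⁻¹) * g⁻¹ := by
      rw [← hg' x, hadj x, hg]
      simp [mul_assoc]
    calc u * φ x * u⁻¹ = g'⁻¹ * (g * (φ a * φ x * (φ a)⁻¹) * g⁻¹) * g' := by
          rw [hu]; group
      _ = g'⁻¹ * (g' * φ x * g'⁻¹) * g' := by rw [key]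
      _ = φ x := by group
  have hcomm : ∀ w : G, Commute w u := fun w => Subgroup.mem_center_iff.mp hcent w
  have hg'e : g' = g * φ a * u⁻¹ := by rw [hu]; group
  refine ⟨u⁻¹, Subgroup.inv_mem _ hcent, ?_⟩
  have hP' : (⟨c' ^ 2, Subgroup.sq_mem_of_index_two h2 c'⟩ : H)
      = ⟨c ^ 2, Subgroup.sq_mem_of_index_two h2 c⟩ * b * a := by
    ext
    simp only [Subgroup.coe_mul, hb_def, ha_def, pow_two]
    group
  rw [← hz, ← hz', hP', map_mul, map_mul, hq, hg'e]
  set p : G := φ a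
  set P : G := φ (⟨c ^ 2, Subgroup.sq_mem_of_index_two h2 c⟩ : H)
  have e1 : (g * p * u⁻¹) ^ 2 = (g * p) ^ 2 * u⁻¹ ^ 2 :=
    ((hcomm (g * p)).inv_right).mul_pow 2
  have e2 : ∀ w : G, w * u⁻¹ ^ 2 = u⁻¹ ^ 2 * w := fun w =>
    (((hcomm w).inv_right).pow_right 2).eq
  have main : (g * p) ^ 2 * ((P * (g⁻¹ * p * g) * p)⁻¹ * (g ^ 2 * P⁻¹)⁻¹) = 1 := by
    simp only [pow_two]; group
  rw [e1, mul_assoc, mul_assoc, ← e2, ← mul_assoc, main, one_mul]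
end

section
/- Let S = {s ∈ Z(G) : s² = e} act on Hom_τ^good(Γ,G)/G (conjugacy classes of homomorphisms Γ → G whose restriction to Γ̃ has stabilizer Z(G)) by s·[φ] = [s·φ] where (s·φ)|_{Γ̃} = φ|_{Γ̃} and (s·φ)(x) = s φ(x) for x ∉ Γ̃. Then this action is free: if s·[φ] = [φ], then s = e. -/
open scoped Classical in
/-- `s · f`: modify `f` by the central element `s` off the index-two subgroup `H`. -/
noncomputable def sDot {Γ G : Type*} [Group Γ] [Group G] (H : Subgroup Γ) (s : G)
    (f : Γ → G) : Γ → G :=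
  fun x => if x ∈ H then f x else s * f x

/-- The action of `{s ∈ Z(G) : s² = e}` on conjugacy classes of
homomorphisms `Γ → G` whose restriction to `Γ̃` has stabilizer `Z(G)` is free:
if `s·φ` is conjugate to `φ`, then `s = e`. -/
theorem sDot_action_free {Γ G : Type*} [Group Γ] [Group G] (H : Subgroup Γ)
    (h2 : H.index = 2) (c : Γ) (hc : c ∉ H) (s : G)
    (hs : s ∈ Subgroup.center G) (hs2 : s ^ 2 = 1)
    (φ : Γ →* G)
    (hZ : ∀ h : G, (∀ x : H, h * φ x * h⁻¹ = φ x) ↔ h ∈ Subgroup.center G)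
    (h : G) (hconj : ∀ x : Γ, sDot H s ⇑φ x = h * φ x * h⁻¹) :
    s = 1 := by
  have hcen : h ∈ Subgroup.center G := (hZ h).mp fun x => by
    have := hconj x.1
    simpa [sDot, x.2] using this.symm
  have hc' := hconj c
  rw [sDot, if_neg hc] at hc'
  have : h * φ c * h⁻¹ = φ c := by
    rw [(Subgroup.mem_center_iff.mp hcen (φ c)).symm]
    group
  rw [this] at hc'
  exact mul_eq_right.mp hc'
end

section
/- Let φ, φ' : Γ → G be homomorphisms whose restrictions to Γ̃ have conjugation-stabilizer exactly Z(G), and suppose φ'|_{Γ̃} = Ad_h ∘ (φ|_{Γ̃}) for some h ∈ G. Then s := φ(c)⁻¹ h⁻¹ φ'(c) h lies in Z(G), satisfies s² = e, and s·φ = Ad_{h⁻¹} ∘ φ'. Hence the S-action on fibers of the restriction map is transitive: [φ'] = s·[φ]. -/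
/-- If `φ, φ' : Γ → G` have good restrictions to `Γ̃` and
`φ'|_{Γ̃} = Ad_h ∘ (φ|_{Γ̃})`, then `s := φ(c)⁻¹ h⁻¹ φ'(c) h` is central with `s² = e`,
and `s·φ = Ad_{h⁻¹} ∘ φ'`; hence the action is transitive on fibers of restriction. -/
theorem sDot_action_transitive {Γ G : Type*} [Group Γ] [Group G] (H : Subgroup Γ)
    (h2 : H.index = 2) (c : Γ) (hc : c ∉ H) (φ φ' : Γ →* G)
    (hZ : ∀ h : G, (∀ x : H, h * φ x * h⁻¹ = φ x) ↔ h ∈ Subgroup.center G)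
    (hZ' : ∀ h : G, (∀ x : H, h * φ' x * h⁻¹ = φ' x) ↔ h ∈ Subgroup.center G)
    (h : G) (hres : ∀ x : H, φ' x = h * φ x * h⁻¹) :
    (φ c)⁻¹ * h⁻¹ * φ' c * h ∈ Subgroup.center G ∧
    ((φ c)⁻¹ * h⁻¹ * φ' c * h) ^ 2 = 1 ∧
    ∀ x : Γ, sDot H ((φ c)⁻¹ * h⁻¹ * φ' c * h) ⇑φ x = h⁻¹ * φ' x * h := by
  -- centrality of s
  have hcen : (φ c)⁻¹ * h⁻¹ * φ' c * h ∈ Subgroup.center G := by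
    rw [← hZ]
    intro x
    have e1 : φ' (c * (x : Γ) * c⁻¹) = h * φ (c * (x : Γ) * c⁻¹) * h⁻¹ :=
      hres ⟨c * (x : Γ) * c⁻¹, (indexTwoNormal H h2).conj_mem x.1 x.2 c⟩
    simp only [map_mul, map_inv] at e1
    rw [hres x] at e1
    calc (φ c)⁻¹ * h⁻¹ * φ' c * h * φ ↑x * ((φ c)⁻¹ * h⁻¹ * φ' c * h)⁻¹
        = (φ c)⁻¹ * (h⁻¹ * (φ' c * (h * φ ↑x * h⁻¹) * (φ' c)⁻¹) * h) * φ c := by group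
      _ = (φ c)⁻¹ * (h⁻¹ * (h * (φ c * φ ↑x * (φ c)⁻¹) * h⁻¹) * h) * φ c := by
            rw [e1]
      _ = φ ↑x := by group
  have hcomm := Subgroup.mem_center_iff.mp hcen
  have h1 := hcomm (φ c)
  have hct : (φ c)⁻¹ * (h⁻¹ * φ' c * h) = (h⁻¹ * φ' c * h) * (φ c)⁻¹ := by
    calc (φ c)⁻¹ * (h⁻¹ * φ' c * h)
        = (((φ c)⁻¹ * h⁻¹ * φ' c * h) * φ c) * (φ c)⁻¹ := by group
      _ = (φ c * ((φ c)⁻¹ * h⁻¹ * φ' c * h)) * (φ c)⁻¹ := by rw [← h1]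
      _ = (h⁻¹ * φ' c * h) * (φ c)⁻¹ := by group
  refine ⟨hcen, ?_, ?_⟩
  · -- s ^ 2 = 1
    have hcc : c * c ∈ H := by
      rw [Subgroup.mul_mem_iff_of_index_two h2]
    have e2 : φ' (c * c) = h * φ (c * c) * h⁻¹ := hres ⟨c * c, hcc⟩
    calc ((φ c)⁻¹ * h⁻¹ * φ' c * h) ^ 2
        = (φ c)⁻¹ * ((h⁻¹ * φ' c * h) * (φ c)⁻¹) * (h⁻¹ * φ' c * h) := by
            rw [sq]; simp only [mul_assoc]
      _ = (φ c)⁻¹ * ((φ c)⁻¹ * (h⁻¹ * φ' c * h)) * (h⁻¹ * φ' c * h) := by rw [← hct]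
      _ = (φ (c * c))⁻¹ * (h⁻¹ * φ' (c * c) * h) := by rw [map_mul, map_mul]; group
      _ = 1 := by rw [e2]; group
  · intro x
    by_cases hxH : x ∈ H
    · have := hres ⟨x, hxH⟩
      simp only [sDot, if_pos hxH, this]
      group
    · have hm : c⁻¹ * x ∈ H := by
        rw [Subgroup.mul_mem_iff_of_index_two h2, inv_mem_iff]
        simp [hc, hxH]
      have e3 : φ' (c⁻¹ * x) = h * φ (c⁻¹ * x) * h⁻¹ := hres ⟨c⁻¹ * x, hm⟩
      simp only [map_mul, map_inv] at e3
      simp only [sDot, if_neg hxH]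
      calc (φ c)⁻¹ * h⁻¹ * φ' c * h * φ x
          = (φ c)⁻¹ * (h⁻¹ * φ' c * h) * φ x := by group
        _ = (h⁻¹ * φ' c * h) * (φ c)⁻¹ * φ x := by rw [hct]
        _ = h⁻¹ * (φ' c * (h * ((φ c)⁻¹ * φ x) * h⁻¹)) * h := by group
        _ = h⁻¹ * (φ' c * ((φ' c)⁻¹ * φ' x)) * h := by rw [← e3]
        _ = h⁻¹ * φ' x * h := by group
end
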